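/- If f is a flow that respects capacity constraints and the residual network G_f contains no negative-cost cycle, and f satisfies all balance constraints, then f is an optimal (minimum-cost) feasible flow. -/

import Mathlib

open Finset

/-- A flow network: directed arcs with costs, capacities (possibly infinite),
lower bounds and vertex balances. -/
structure Network (V E : Type) where
  src : E → V
  dst : E → V
  cost : E → ℝ
  cap : E → WithTop ℝ
  low : E → ℝ
  bal : V → ℝ

variable {V E : Type}

def outflow [Fintype E] [DecidableEq V] (N : Network V E) (f : E → ℝ) (v : V) : ℝ :=
  ∑ e, if N.src e = v then f e else 0

def inflow [Fintype E] [DecidableEq V] (N : Network V E) (f : E → ℝ) (v : V) : ℝ :=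
  ∑ e, if N.dst e = v then f e else 0

/-- `f` obeys lower bounds and capacities. -/
def RespectsCap (N : Network V E) (f : E → ℝ) : Prop :=
  ∀ e, N.low e ≤ f e ∧ (f e : WithTop ℝ) ≤ N.cap e

/-- Feasible flow: capacity constraints and balance constraints. -/
def Feasible [Fintype E] [DecidableEq V] (N : Network V E) (f : E → ℝ) : Prop :=
  RespectsCap N f ∧ ∀ v, outflow N f v - inflow N f v = N.bal v

def flowCost [Fintype E] (N : Network V E) (f : E → ℝ) : ℝ := ∑ e, N.cost e * f e

/-- Excess of a vertex: `b(v) + inflow - outflow`. -/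
def excess [Fintype E] [DecidableEq V] (N : Network V E) (f : E → ℝ) (v : V) : ℝ :=
  N.bal v + inflow N f v - outflow N f v

/-- Residual steps: `Sum.inl e` is the forward residual arc of `e`,
`Sum.inr e` the backward (reverse) residual arc. -/
def stepTail (N : Network V E) : E ⊕ E → V := Sum.elim N.src N.dst
def stepHead (N : Network V E) : E ⊕ E → V := Sum.elim N.dst N.src
def stepCost (N : Network V E) : E ⊕ E → ℝ := Sum.elim N.cost (fun e => -N.cost e)

/-- A residual step is present in the residual network `G_f`. -/
def StepOk (N : Network V E) (f : E → ℝ) : E ⊕ E → Prop :=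
  Sum.elim (fun e => (f e : WithTop ℝ) < N.cap e) (fun e => N.low e < f e)

def listCost (N : Network V E) (L : List (E ⊕ E)) : ℝ := (L.map (stepCost N)).sum

/-- A (closed) directed cycle in the residual network `G_f`. -/
def IsResidCycle (N : Network V E) (f : E → ℝ) (L : List (E ⊕ E)) : Prop :=
  L ≠ [] ∧ (∀ d ∈ L, StepOk N f d) ∧
  L.Chain' (fun a b => stepHead N a = stepTail N b) ∧
  L.getLast?.map (stepHead N) = L.head?.map (stepTail N)

/-- The residual network contains no negative-cost cycle. -/
def NoNegCycle (N : Network V E) (f : E → ℝ) : Prop :=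
  ∀ L, IsResidCycle N f L → 0 ≤ listCost N L

/-- A directed path from `s` to `t` in the residual network `G_f`. -/
def IsResidPath (N : Network V E) (f : E → ℝ) (s t : V) (L : List (E ⊕ E)) : Prop :=
  (∀ d ∈ L, StepOk N f d) ∧
  L.Chain' (fun a b => stepHead N a = stepTail N b) ∧
  L.head?.map (stepTail N) = some s ∧ L.getLast?.map (stepHead N) = some t


section Aux

variable [Fintype E]

/-- A nodup residual walk ending at `v` (or the empty walk). -/
def ValidTo (N : Network V E) (f : E → ℝ) (v : V) (L : List (E ⊕ E)) : Prop :=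
  L.Nodup ∧ (∀ d ∈ L, StepOk N f d) ∧
  L.Chain' (fun a b => stepHead N a = stepTail N b) ∧
  (L = [] ∨ L.getLast?.map (stepHead N) = some v)

def potSet (N : Network V E) (f : E → ℝ) (v : V) : Set ℝ :=
  listCost N '' {L | ValidTo N f v L}

lemma listCost_nil (N : Network V E) : listCost N ([] : List (E ⊕ E)) = 0 := by
  simp [listCost]

lemma listCost_append (N : Network V E) (A B : List (E ⊕ E)) :
    listCost N (A ++ B) = listCost N A + listCost N B := by
  simp [listCost]

lemma listCost_cons (N : Network V E) (d : E ⊕ E) (B : List (E ⊕ E)) :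
    listCost N (d :: B) = stepCost N d + listCost N B := by
  simp [listCost]

lemma zero_mem_potSet (N : Network V E) (f : E → ℝ) (v : V) : (0 : ℝ) ∈ potSet N f v :=
  ⟨[], ⟨List.nodup_nil, by simp, List.isChain_nil, Or.inl rfl⟩, by simp [listCost]⟩

lemma potSet_nonempty (N : Network V E) (f : E → ℝ) (v : V) : (potSet N f v).Nonempty :=
  ⟨0, zero_mem_potSet N f v⟩

lemma potSet_finite (N : Network V E) (f : E → ℝ) (v : V) : (potSet N f v).Finite := by
  classical
  have h1 : {L : List (E ⊕ E) | L.Nodup}.Finite := by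
    haveI : Fintype {l : List (E ⊕ E) // l.Nodup} := fintypeNodupList
    exact Set.finite_coe_iff.mp (Finite.of_fintype {l : List (E ⊕ E) // l.Nodup})
  exact ((h1.subset (fun L hL => hL.1)).image _)

noncomputable def pot (N : Network V E) (f : E → ℝ) (v : V) : ℝ := sInf (potSet N f v)

lemma pot_mem (N : Network V E) (f : E → ℝ) (v : V) : pot N f v ∈ potSet N f v :=
  (potSet_nonempty N f v).csInf_mem (potSet_finite N f v)

lemma pot_le (N : Network V E) (f : E → ℝ) (v : V) {x : ℝ} (hx : x ∈ potSet N f v) :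
    pot N f v ≤ x :=
  csInf_le (potSet_finite N f v).bddBelow hx

lemma pot_triangle (N : Network V E) (f : E → ℝ) (hnn : NoNegCycle N f)
    (d : E ⊕ E) (hd : StepOk N f d) :
    pot N f (stepHead N d) ≤ pot N f (stepTail N d) + stepCost N d := by
  classical
  obtain ⟨L, hL, hcost⟩ := pot_mem N f (stepTail N d)
  obtain ⟨hnd, hok, hch, hend⟩ := hL
  rcases Classical.em (d ∈ L) with hmem | hmem
  · -- L = A ++ d :: B ; use prefix A ++ [d], and d :: B is a residual cycle
    obtain ⟨A, B, rfl⟩ := List.append_of_mem hmem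
    have hLne : (A ++ d :: B) ≠ [] := by simp
    have hend' : (A ++ d :: B).getLast?.map (stepHead N) = some (stepTail N d) := by
      rcases hend with h | h
      · exact absurd h hLne
      · exact h
    -- the cycle d :: B
    have hsuf : (d :: B) <:+ (A ++ d :: B) := List.suffix_append A (d :: B)
    have h5 : (d :: B).getLast? = some ((d :: B).getLast (by simp)) :=
      List.getLast?_eq_getLast (by simp)
    have hlast : (A ++ d :: B).getLast? = (d :: B).getLast? := by
      rw [List.getLast?_append, h5]; rfl
    have hcyc : IsResidCycle N f (d :: B) := by
      refine ⟨by simp, fun x hx => hok x (hsuf.subset hx), hch.suffix hsuf, ?_⟩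
      rw [← hlast, hend']
      simp
    have hBd : 0 ≤ listCost N (d :: B) := hnn _ hcyc
    -- the walk A ++ [d] ends at stepHead N d
    have hpre : (A ++ [d]) <+: (A ++ d :: B) := ⟨B, by simp⟩
    have hmem2 : listCost N (A ++ [d]) ∈ potSet N f (stepHead N d) := by
      refine ⟨A ++ [d], ⟨hnd.sublist hpre.sublist, fun x hx => hok x (hpre.sublist.subset hx),
        hch.prefix hpre, Or.inr ?_⟩, rfl⟩
      simp
    have h1 : pot N f (stepHead N d) ≤ listCost N (A ++ [d]) := pot_le N f _ hmem2
    have h2 : listCost N (A ++ d :: B) = listCost N A + stepCost N d + listCost N B := by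
      rw [listCost_append, listCost_cons]; ring
    have h3 : listCost N (A ++ [d]) = listCost N A + stepCost N d := by
      rw [listCost_append]; simp [listCost]
    have h4 : listCost N (d :: B) = stepCost N d + listCost N B := listCost_cons N d B
    rw [← hcost]
    linarith
  · rcases eq_or_ne L [] with rfl | hLne
    · -- use the singleton walk [d]
      have hmem2 : listCost N [d] ∈ potSet N f (stepHead N d) := by
        refine ⟨[d], ⟨List.nodup_singleton d, by simpa using hd, List.isChain_singleton d,
          Or.inr (by simp)⟩, rfl⟩
      have h1 : pot N f (stepHead N d) ≤ listCost N [d] := pot_le N f _ hmem2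
      have h2 : listCost N ([] : List (E ⊕ E)) = 0 := listCost_nil N
      have h3 : listCost N [d] = stepCost N d := by simp [listCost]
      rw [← hcost]
      linarith
    · -- use the walk L ++ [d]
      have hend' : L.getLast?.map (stepHead N) = some (stepTail N d) := by
        rcases hend with h | h
        · exact absurd h hLne
        · exact h
      have hmem2 : listCost N (L ++ [d]) ∈ potSet N f (stepHead N d) := by
        refine ⟨L ++ [d], ⟨?_, ?_, ?_, Or.inr (by simp)⟩, rfl⟩
        · exact List.nodup_append.mpr ⟨hnd, List.nodup_singleton d, fun a ha b hb => by
            rw [List.mem_singleton] at hb; subst hb; exact fun h => hmem (h ▸ ha)⟩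
        · intro x hx
          rcases List.mem_append.mp hx with h | h
          · exact hok x h
          · simpa using (by simpa using h) ▸ hd
        · apply List.isChain_append.mpr
          refine ⟨hch, List.isChain_singleton d, ?_⟩
          intro x hx y hy
          simp only [List.head?_cons, Option.mem_def, Option.some.injEq] at hy
          subst hy
          rw [Option.mem_def] at hx
          rw [hx] at hend'
          simpa using hend'
      have h1 : pot N f (stepHead N d) ≤ listCost N (L ++ [d]) := pot_le N f _ hmem2
      have h3 : listCost N (L ++ [d]) = listCost N L + stepCost N d := by
        rw [listCost_append]; simp [listCost]
      rw [← hcost]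
      linarith

lemma pot_nonpos (N : Network V E) (f : E → ℝ) (v : V) : pot N f v ≤ 0 :=
  pot_le N f v (zero_mem_potSet N f v)

end Aux

/-- If `f` respects the capacity constraints, satisfies all balance constraints,
and the residual network `G_f` contains no negative-cost cycle, then `f` is an
optimal (minimum-cost) feasible flow. -/
theorem stmt0 {V E : Type} [Fintype V] [Fintype E] [DecidableEq V]
    (N : Network V E) (f : E → ℝ)
    (hcap : RespectsCap N f)
    (hbal : ∀ v, outflow N f v - inflow N f v = N.bal v)
    (hnn : NoNegCycle N f) :
    ∀ g : E → ℝ, Feasible N g → flowCost N f ≤ flowCost N g := by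
  intro g hg
  obtain ⟨hgcap, hgbal⟩ := hg
  classical
  set π : V → ℝ := pot N f with hπ
  set h : E → ℝ := fun e => g e - f e with hh
  -- reduced cost times h is nonneg
  have hred : ∀ e, 0 ≤ (N.cost e + π (N.src e) - π (N.dst e)) * h e := by
    intro e
    rcases lt_trichotomy (h e) 0 with hlt | heq | hgt
    · have hge : g e < f e := by simp only [hh] at hlt; linarith
      have hok : StepOk N f (Sum.inr e) := by
        have := (hgcap e).1
        simp only [StepOk, Sum.elim_inr]
        linarith
      have ht := pot_triangle N f hnn (Sum.inr e) hok
      simp only [stepHead, stepTail, stepCost, Sum.elim_inr, ← hπ] at ht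
      have hc : N.cost e + π (N.src e) - π (N.dst e) ≤ 0 := by linarith
      nlinarith
    · rw [heq, mul_zero]
    · have hge : f e < g e := by simp only [hh] at hgt; linarith
      have hok : StepOk N f (Sum.inl e) := by
        simp only [StepOk, Sum.elim_inl]
        exact lt_of_lt_of_le (by exact_mod_cast hge) (hgcap e).2
      have ht := pot_triangle N f hnn (Sum.inl e) hok
      simp only [stepHead, stepTail, stepCost, Sum.elim_inl, ← hπ] at ht
      have hc : 0 ≤ N.cost e + π (N.src e) - π (N.dst e) := by linarith
      exact mul_nonneg hc (le_of_lt hgt)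
  -- swapping sums: vertex-weighted outflow/inflow
  have hswap : ∀ (p : V → ℝ) (s : E → V) (w : E → ℝ),
      ∑ v, p v * (∑ e, if s e = v then w e else 0) = ∑ e, p (s e) * w e := by
    intro p s w
    simp_rw [Finset.mul_sum, mul_ite, mul_zero]
    rw [Finset.sum_comm]
    refine Finset.sum_congr rfl fun e _ => ?_
    simp
  -- h is a circulation
  have hcirc : ∀ v, outflow N h v - inflow N h v = 0 := by
    intro v
    have h1 : outflow N h v = outflow N g v - outflow N f v := by
      unfold outflow
      rw [← Finset.sum_sub_distrib]
      refine Finset.sum_congr rfl fun e _ => ?_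
      split <;> simp [hh]
    have h2 : inflow N h v = inflow N g v - inflow N f v := by
      unfold inflow
      rw [← Finset.sum_sub_distrib]
      refine Finset.sum_congr rfl fun e _ => ?_
      split <;> simp [hh]
    have := hbal v
    have := hgbal v
    rw [h1, h2]
    linarith
  -- the potential part sums to zero
  have hzero : ∑ e, (π (N.src e) - π (N.dst e)) * h e = 0 := by
    simp_rw [sub_mul]
    rw [Finset.sum_sub_distrib, ← hswap π N.src h, ← hswap π N.dst h]
    rw [← Finset.sum_sub_distrib]
    simp_rw [← mul_sub]
    have : ∀ v ∈ Finset.univ, π v * ((∑ e, if N.src e = v then h e else 0) -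
        (∑ e, if N.dst e = v then h e else 0)) = 0 := by
      intro v _
      have := hcirc v
      unfold outflow inflow at this
      rw [this, mul_zero]
    rw [Finset.sum_congr rfl this]
    simp
  have hmain : 0 ≤ ∑ e, N.cost e * h e := by
    have : ∑ e, N.cost e * h e =
        (∑ e, (N.cost e + π (N.src e) - π (N.dst e)) * h e) -
        ∑ e, (π (N.src e) - π (N.dst e)) * h e := by
      rw [← Finset.sum_sub_distrib]
      refine Finset.sum_congr rfl fun e _ => ?_
      ring
    rw [this, hzero, sub_zero]
    exact Finset.sum_nonneg fun e _ => hred e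
  have hfin : flowCost N g - flowCost N f = ∑ e, N.cost e * h e := by
    unfold flowCost
    rw [← Finset.sum_sub_distrib]
    refine Finset.sum_congr rfl fun e _ => ?_
    simp [hh]
    ring
  linarith
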